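/- arXiv:1506.05306 — 3 statements merged into one kernel-verified Lean document; each statement's English description precedes it below -/
import Mathlib

section
/- Fix a real β > −1 and integers n, k with 0 ≤ k and k + 1 ≤ n. Then for every real α > −1 and all reals x > 0 and y, the function α ↦ P^{(α,β)}_{n,k}(x,y) (Laguerre–Jacobi Koornwinder polynomial) is differentiable at α with derivative ∑_{s=0}^{n−k−1} (1/(n−k−s)) · P^{(α,β)}_{k+s,k}(x,y). -/
open Finset MeasureTheory Real

/-- Pochhammer symbol `(a)_m = a (a+1) ⋯ (a+m-1)`. -/
noncomputable def poch (a : ℝ) (m : ℕ) : ℝ := ∏ i ∈ Finset.range m, (a + i)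

/-- Jacobi polynomial `P_n^{(α,β)}(x)`. -/
noncomputable def jacobiP (α β : ℝ) (n : ℕ) (x : ℝ) : ℝ :=
  ∑ i ∈ Finset.range (n + 1),
    poch (α + i + 1) (n - i) * poch (n + α + β + 1) i /
      ((Nat.factorial (n - i) : ℝ) * (Nat.factorial i : ℝ)) * ((x - 1) / 2) ^ i

/-- Generalized Laguerre polynomial `L_n^{(α)}(x)`. -/
noncomputable def laguerreL (α : ℝ) (n : ℕ) (x : ℝ) : ℝ :=
  ∑ i ∈ Finset.range (n + 1),
    poch (α + i + 1) (n - i) / ((Nat.factorial (n - i) : ℝ) * (Nat.factorial i : ℝ)) * (-x) ^ i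

/-- Laguerre–Jacobi Koornwinder polynomial
`P^{(α,β)}_{n,k}(x,y) = L^{(α+2k+1)}_{n-k}(x) · x^k · P^{(β,0)}_k(y/x)`. -/
noncomputable def ljP (α β : ℝ) (n k : ℕ) (x y : ℝ) : ℝ :=
  laguerreL (α + 2 * k + 1) (n - k) x * x ^ k * jacobiP β 0 k (y / x)

/-- The value of the parameter derivative of `poch`. -/
noncomputable def pochD (m : ℕ) (B : ℝ) : ℝ :=
  ∑ t ∈ Finset.range m, ((m.factorial : ℝ) / (((m : ℝ) - t) * t.factorial)) * poch B t

lemma pochD_succ (m : ℕ) (B : ℝ) :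
    pochD (m + 1) B = (B + m) * pochD m B + poch B m := by
  set A : ℕ → ℝ := fun u =>
    ((m.factorial : ℝ) * u / ((u.factorial : ℝ) * ((m : ℝ) + 1 - u))) * poch B u with hA
  have key : ∀ t ∈ Finset.range m,
      ((((m+1).factorial : ℝ) / ((((m:ℝ)+1) - t) * t.factorial)) * poch B t)
        - (B + m) * (((m.factorial : ℝ) / (((m : ℝ) - t) * t.factorial)) * poch B t)
      = A t - A (t + 1) := by
    intro t ht
    have ht' : t < m := Finset.mem_range.mp ht
    have h1 : ((m : ℝ) - t) ≠ 0 := by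
      have : (t : ℝ) < m := by exact_mod_cast ht'
      linarith
    have h2 : ((m : ℝ) + 1 - t) ≠ 0 := by
      have : (t : ℝ) < m := by exact_mod_cast ht'
      linarith
    have h3 : (t.factorial : ℝ) ≠ 0 := by exact_mod_cast t.factorial_ne_zero
    have hps : poch B (t + 1) = poch B t * (B + t) := Finset.prod_range_succ _ _
    simp only [hA, hps, Nat.factorial_succ]
    push_cast
    have h4 : ((m : ℝ) + 1 - (t + 1)) ≠ 0 := by rw [show ((m : ℝ) + 1 - (t + 1)) = m - t by ring]; exact h1
    field_simp
    ring
  have tel : ∑ t ∈ Finset.range m, (A t - A (t+1)) = A 0 - A m :=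
    Finset.sum_range_sub' A m
  have hA0 : A 0 = 0 := by simp [hA]
  have hAm : A m = m * poch B m := by
    have h3 : (m.factorial : ℝ) ≠ 0 := by exact_mod_cast m.factorial_ne_zero
    simp only [hA]
    field_simp
    ring
  simp only [pochD, Finset.sum_range_succ]
  rw [Finset.mul_sum]
  rw [show ∀ a b c d : ℝ, a + b = c + d ↔ a - c = d - b by intros; constructor <;> intro <;> linarith]
  push_cast
  rw [← Finset.sum_sub_distrib, Finset.sum_congr rfl key, tel, hA0, hAm]
  have h3 : (m.factorial : ℝ) ≠ 0 := by exact_mod_cast m.factorial_ne_zero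
  have : (((m:ℝ) + 1) - m) = 1 := by ring
  rw [this]
  push_cast [Nat.factorial_succ]
  field_simp
  ring

lemma hasDerivAt_poch (m : ℕ) (B : ℝ) :
    HasDerivAt (fun b : ℝ => poch b m) (pochD m B) B := by
  induction m with
  | zero => simpa [poch, pochD] using hasDerivAt_const B (1:ℝ)
  | succ m ih =>
    have h : HasDerivAt (fun b : ℝ => poch b m * (b + m))
        (pochD m B * (B + m) + poch B m * 1) B :=
      ih.mul ((hasDerivAt_id B).add_const _)
    have hfun : (fun b : ℝ => poch b (m+1)) = fun b : ℝ => poch b m * (b + m) := by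
      funext b; exact Finset.prod_range_succ _ _
    rw [hfun, pochD_succ]
    convert h using 1; ring

lemma sum_triangle (n : ℕ) (f : ℕ → ℕ → ℝ) :
    ∑ i ∈ Finset.range n, ∑ t ∈ Finset.range (n - i), f i t
      = ∑ s ∈ Finset.range n, ∑ i ∈ Finset.range (s + 1), f i (s - i) := by
  induction n with
  | zero => simp
  | succ n ih =>
    rw [Finset.sum_range_succ (fun i => ∑ t ∈ Finset.range (n + 1 - i), f i t) n,
        Finset.sum_range_succ (fun s => ∑ i ∈ Finset.range (s + 1), f i (s - i)) n, ← ih]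
    have h1 : ∀ i ∈ Finset.range n,
        ∑ t ∈ Finset.range (n + 1 - i), f i t
          = (∑ t ∈ Finset.range (n - i), f i t) + f i (n - i) := by
      intro i hi
      have hi' := Finset.mem_range.mp hi
      have : n + 1 - i = (n - i) + 1 := by omega
      rw [this, Finset.sum_range_succ]
    rw [Finset.sum_congr rfl h1, Finset.sum_add_distrib]
    rw [Finset.sum_range_succ (fun i => f i (n - i)) n]
    simp [Nat.sub_self]
    ring

lemma hasDerivAt_laguerreL (n : ℕ) (x A : ℝ) :
    HasDerivAt (fun a : ℝ => laguerreL a n x)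
      (∑ s ∈ Finset.range n, (1 / ((n : ℝ) - s)) * laguerreL A s x) A := by
  have hd : HasDerivAt (fun a : ℝ => laguerreL a n x)
      (∑ i ∈ Finset.range (n + 1),
        pochD (n - i) (A + i + 1) * 1 /
          ((Nat.factorial (n - i) : ℝ) * (Nat.factorial i : ℝ)) * (-x) ^ i) A := by
    unfold laguerreL
    apply HasDerivAt.fun_sum
    intro i _
    have hlin : HasDerivAt (fun a : ℝ => a + (i : ℝ) + 1) 1 A :=
      ((hasDerivAt_id A).add_const _).add_const _
    exact (((hasDerivAt_poch (n - i) (A + i + 1)).comp A hlin).div_const _).mul_const _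
  have key : (∑ i ∈ Finset.range (n + 1),
        pochD (n - i) (A + i + 1) * 1 /
          ((Nat.factorial (n - i) : ℝ) * (Nat.factorial i : ℝ)) * (-x) ^ i)
      = ∑ s ∈ Finset.range n, (1 / ((n : ℝ) - s)) * laguerreL A s x := by
    set F : ℕ → ℕ → ℝ := fun i t =>
      poch (A + i + 1) t /
        (((n : ℝ) - i - t) * (Nat.factorial t : ℝ) * (Nat.factorial i : ℝ)) * (-x) ^ i with hF
    rw [Finset.sum_range_succ]
    have hlast : pochD (n - n) (A + n + 1) * 1 /
        ((Nat.factorial (n - n) : ℝ) * (Nat.factorial n : ℝ)) * (-x) ^ n = 0 := by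
      simp [pochD]
    rw [hlast, add_zero]
    have hstep : ∀ i ∈ Finset.range n,
        pochD (n - i) (A + i + 1) * 1 /
          ((Nat.factorial (n - i) : ℝ) * (Nat.factorial i : ℝ)) * (-x) ^ i
          = ∑ t ∈ Finset.range (n - i), F i t := by
      intro i hi
      have hi' : i ≤ n := le_of_lt (Finset.mem_range.mp hi)
      rw [pochD, mul_one, Finset.sum_div, Finset.sum_mul]
      refine Finset.sum_congr rfl fun t ht => ?_
      have ht' : t < n - i := Finset.mem_range.mp ht
      have hcast : ((n - i : ℕ) : ℝ) = (n : ℝ) - i := Nat.cast_sub hi'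
      have hne : ((n : ℝ) - i - t) ≠ 0 := by
        have : (t : ℝ) < (n : ℝ) - i := by
          rw [← hcast]; exact_mod_cast ht'
        linarith
      have f1 : ((n - i).factorial : ℝ) ≠ 0 := by exact_mod_cast (n - i).factorial_ne_zero
      have f2 : (t.factorial : ℝ) ≠ 0 := by exact_mod_cast t.factorial_ne_zero
      have f3 : (i.factorial : ℝ) ≠ 0 := by exact_mod_cast i.factorial_ne_zero
      simp only [hF, hcast]
      field_simp
    rw [Finset.sum_congr rfl hstep, sum_triangle n F]
    refine Finset.sum_congr rfl fun s hs => ?_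
    have hs' : s < n := Finset.mem_range.mp hs
    rw [laguerreL, Finset.mul_sum]
    refine Finset.sum_congr rfl fun i hi => ?_
    have hi' : i ≤ s := Nat.lt_succ_iff.mp (Finset.mem_range.mp hi)
    have hcast : ((s - i : ℕ) : ℝ) = (s : ℝ) - i := Nat.cast_sub hi'
    have hns : ((n : ℝ) - s) ≠ 0 := by
      have : (s : ℝ) < n := by exact_mod_cast hs'
      linarith
    have f2 : ((s - i).factorial : ℝ) ≠ 0 := by exact_mod_cast (s - i).factorial_ne_zero
    have f3 : (i.factorial : ℝ) ≠ 0 := by exact_mod_cast i.factorial_ne_zero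
    simp only [hF, hcast]
    have : (n : ℝ) - i - ((s : ℝ) - i) = (n : ℝ) - s := by ring
    rw [this]
    field_simp
  rw [← key]
  exact hd

/-- Parameter derivative with respect to `α` of the Laguerre–Jacobi Koornwinder polynomials. -/
theorem ljP_hasDerivAt_param_alpha
    (β : ℝ) (hβ : β > -1) (n k : ℕ) (hk : 0 ≤ k) (hkn : k + 1 ≤ n)
    (α : ℝ) (hα : α > -1) (x : ℝ) (hx : 0 < x) (y : ℝ) :
    HasDerivAt (fun a : ℝ => ljP a β n k x y)
      (∑ s ∈ Finset.range (n - k), (1 / ((n : ℝ) - k - s)) * ljP α β (k + s) k x y) α := by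
  have hkn' : k ≤ n := le_of_lt hkn
  have hlin : HasDerivAt (fun a : ℝ => a + 2 * (k : ℝ) + 1) 1 α :=
    ((hasDerivAt_id α).add_const _).add_const _
  have h1 : HasDerivAt (fun a : ℝ => laguerreL (a + 2 * (k : ℝ) + 1) (n - k) x)
      ((∑ s ∈ Finset.range (n - k),
        (1 / (((n - k : ℕ) : ℝ) - s)) * laguerreL (α + 2 * k + 1) s x) * 1) α :=
    HasDerivAt.comp (h := fun a : ℝ => a + 2 * (k : ℝ) + 1) α (hasDerivAt_laguerreL (n - k) x (α + 2 * k + 1)) hlin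
  have h2 := (h1.mul_const (x ^ k)).mul_const (jacobiP β 0 k (y / x))
  have hfun : (fun a : ℝ => ljP a β n k x y)
      = fun a : ℝ => laguerreL (a + 2 * (k : ℝ) + 1) (n - k) x * x ^ k
          * jacobiP β 0 k (y / x) := by
    funext a; rfl
  rw [hfun]
  convert h2 using 1
  · rfl
  · rfl
  rw [mul_one, Finset.sum_mul, Finset.sum_mul]
  refine Finset.sum_congr rfl fun s _ => ?_
  have hcast : ((n - k : ℕ) : ℝ) = (n : ℝ) - k := Nat.cast_sub hkn'
  have hks : k + s - k = s := Nat.add_sub_cancel_left k s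
  rw [ljP, hks, hcast]
  ring
end

section
/- Fix a real β > −1 and integers n, k with 0 ≤ k and k + 1 ≤ n. Then for every real α with α > −1 and α − β > −1, and all reals x > 0 and y, the function α ↦ P^{(α,β)}_{n,k}(x,y) (Laguerre–Laguerre Koornwinder polynomial) is differentiable at α with derivative ∑_{s=0}^{n−k−1} (1/(n−k−s)) · P^{(α,β)}_{k+s,k}(x,y). -/
open Finset MeasureTheory Real

lemma poch_succ (a : ℝ) (m : ℕ) : poch a (m+1) = poch a m * (a + m) :=
  Finset.prod_range_succ _ _

lemma poch_hasDerivAt (m : ℕ) (a : ℝ) :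
    HasDerivAt (fun b : ℝ => poch b m)
      (∑ t ∈ Finset.range m,
        (m.factorial : ℝ) / (((m - t : ℕ) : ℝ) * (t.factorial : ℝ)) * poch a t) a := by
  induction m with
  | zero => simpa [poch] using hasDerivAt_const a (1:ℝ)
  | succ m ih =>
    have hfun : (fun b : ℝ => poch b (m+1)) = fun b : ℝ => poch b m * (b + m) := by
      funext b; exact poch_succ b m
    have hg : HasDerivAt (fun b : ℝ => b + (m:ℝ)) 1 a := (hasDerivAt_id a).add_const _
    rw [hfun]
    convert ih.mul hg using 1
    · rfl
    · rfl
    · rfl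
    rw [mul_one, Finset.sum_mul]
    have h1 : ∀ t ∈ Finset.range m,
        (m.factorial : ℝ) / (((m - t : ℕ) : ℝ) * (t.factorial : ℝ)) * poch a t * (a + ↑m)
        = (m.factorial : ℝ) / (((m - t : ℕ) : ℝ) * (t.factorial : ℝ)) * poch a (t+1)
          + (m.factorial : ℝ) / (t.factorial : ℝ) * poch a t := by
      intro t ht
      rw [Finset.mem_range] at ht
      have h0 : ((m - t : ℕ) : ℝ) ≠ 0 := Nat.cast_ne_zero.mpr (Nat.sub_ne_zero_of_lt ht)
      have hft : (t.factorial : ℝ) ≠ 0 := Nat.cast_ne_zero.mpr t.factorial_ne_zero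
      have hc : (m.factorial : ℝ) / (((m - t : ℕ) : ℝ) * (t.factorial : ℝ)) * ((m:ℝ) - t)
          = (m.factorial : ℝ) / (t.factorial : ℝ) := by
        rw [Nat.cast_sub ht.le] at h0 ⊢
        field_simp
      calc (m.factorial : ℝ) / (((m - t : ℕ) : ℝ) * (t.factorial : ℝ)) * poch a t * (a + ↑m)
          = (m.factorial : ℝ) / (((m - t : ℕ) : ℝ) * (t.factorial : ℝ)) * (poch a t * (a + ↑t))
            + ((m.factorial : ℝ) / (((m - t : ℕ) : ℝ) * (t.factorial : ℝ)) * ((m:ℝ) - t)) * poch a t := by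
            ring
        _ = _ := by rw [hc, ← poch_succ]
    rw [Finset.sum_congr rfl h1, Finset.sum_add_distrib]
    have hB : (∑ t ∈ Finset.range m, (m.factorial : ℝ) / (t.factorial : ℝ) * poch a t) + poch a m
        = ∑ t ∈ Finset.range (m+1), (m.factorial : ℝ) / (t.factorial : ℝ) * poch a t := by
      rw [Finset.sum_range_succ, div_self (Nat.cast_ne_zero.mpr m.factorial_ne_zero), one_mul]
    rw [add_assoc, hB, Finset.sum_range_succ' _ m]
    conv_rhs => rw [Finset.sum_range_succ' _ m]
    have h0l : (((m+1).factorial : ℝ)) / (((m + 1 - 0 : ℕ) : ℝ) * ((Nat.factorial 0 : ℕ) : ℝ)) * poch a 0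
        = (m.factorial : ℝ) := by
      simp [poch, Nat.factorial_succ]
      field_simp
    have h0r : (m.factorial : ℝ) / ((Nat.factorial 0 : ℕ) : ℝ) * poch a 0 = (m.factorial : ℝ) := by
      simp [poch]
    rw [h0l, h0r, ← add_assoc, ← Finset.sum_add_distrib]
    refine congrArg (· + (m.factorial : ℝ)) (Finset.sum_congr rfl fun t ht => ?_)
    rw [Finset.mem_range] at ht
    have h0 : ((m - t : ℕ) : ℝ) ≠ 0 := Nat.cast_ne_zero.mpr (Nat.sub_ne_zero_of_lt ht)
    have hco : (((m+1).factorial : ℝ)) / (((m + 1 - (t+1) : ℕ) : ℝ) * (((t+1).factorial : ℕ) : ℝ))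
        = (m.factorial : ℝ) / (((m - t : ℕ) : ℝ) * (t.factorial : ℝ))
          + (m.factorial : ℝ) / (((t+1).factorial : ℕ) : ℝ) := by
      have hms : m + 1 - (t+1) = m - t := by omega
      rw [hms, Nat.factorial_succ (t), Nat.factorial_succ m, Nat.cast_sub ht.le] at *
      have h1 : ((m:ℝ) - t) ≠ 0 := h0
      have hft : (t.factorial : ℝ) ≠ 0 := Nat.cast_ne_zero.mpr t.factorial_ne_zero
      push_cast
      field_simp
      ring
    rw [hco]
    ring

lemma laguerreL_hasDerivAt (n : ℕ) (x α : ℝ) :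
    HasDerivAt (fun a : ℝ => laguerreL a n x)
      (∑ s ∈ Finset.range n, 1 / ((n : ℝ) - s) * laguerreL α s x) α := by
  have hterm : ∀ i ∈ Finset.range (n+1), HasDerivAt
      (fun a : ℝ => poch (a + i + 1) (n - i) /
          ((Nat.factorial (n - i) : ℝ) * (Nat.factorial i : ℝ)) * (-x) ^ i)
      ((∑ t ∈ Finset.range (n - i),
          ((n-i).factorial : ℝ) / (((n - i - t : ℕ) : ℝ) * (t.factorial : ℝ)) * poch (α + i + 1) t)
        * 1 / ((Nat.factorial (n - i) : ℝ) * (Nat.factorial i : ℝ)) * (-x) ^ i) α := by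
    intro i _
    have hg : HasDerivAt (fun a : ℝ => a + ↑i + 1) 1 α := by
      simpa [← add_assoc] using ((hasDerivAt_id α).add_const ((i:ℝ) + 1))
    have h := (poch_hasDerivAt (n - i) (α + i + 1)).comp α hg
    simpa [Function.comp] using (h.div_const _).mul_const _
  have H := HasDerivAt.sum hterm
  have hfun : (fun a : ℝ => laguerreL a n x) = fun a : ℝ => ∑ i ∈ Finset.range (n+1),
      poch (a + i + 1) (n - i) / ((Nat.factorial (n - i) : ℝ) * (Nat.factorial i : ℝ)) * (-x) ^ i := by
    funext a; rfl
  rw [hfun]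
  convert H using 1
  · rfl
  · rfl
  · ext a; simp [Finset.sum_apply]
  -- reindex double sum
  -- RHS (H's deriv) : ∑_{i ≤ n} (∑_{t < n-i} …) * 1 / C_i * X_i
  have hL : ∀ i ∈ Finset.range (n+1),
      (∑ t ∈ Finset.range (n - i),
          ((n-i).factorial : ℝ) / (((n - i - t : ℕ) : ℝ) * (t.factorial : ℝ)) * poch (α + i + 1) t)
        * 1 / ((Nat.factorial (n - i) : ℝ) * (Nat.factorial i : ℝ)) * (-x) ^ i
      = ∑ t ∈ Finset.range (n - i), 1 / ((n : ℝ) - (i + t)) *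
          (poch (α + i + 1) t / ((t.factorial : ℝ) * (i.factorial : ℝ)) * (-x) ^ i) := by
    intro i hi
    rw [mul_one, Finset.sum_div, Finset.sum_mul]
    refine Finset.sum_congr rfl fun t ht => ?_
    rw [Finset.mem_range] at ht hi
    have h1 : ((n - i - t : ℕ) : ℝ) = (n : ℝ) - (i + t) := by
      have : (n - i - t : ℕ) = n - (i + t) := by omega
      rw [this, Nat.cast_sub (by omega), Nat.cast_add]
    have h2 : ((n-i).factorial : ℝ) ≠ 0 := Nat.cast_ne_zero.mpr (Nat.factorial_ne_zero _)
    have h3 : ((n:ℝ) - (i + t)) ≠ 0 := by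
      rw [← h1]; exact Nat.cast_ne_zero.mpr (by omega)
    have h4 : (t.factorial : ℝ) ≠ 0 := Nat.cast_ne_zero.mpr (Nat.factorial_ne_zero _)
    have h5 : (i.factorial : ℝ) ≠ 0 := Nat.cast_ne_zero.mpr (Nat.factorial_ne_zero _)
    rw [h1]
    field_simp
  rw [Finset.sum_congr rfl hL]
  -- LHS : ∑_{s<n} 1/(n-s) * laguerreL α s x
  have hR : ∀ s ∈ Finset.range n, 1 / ((n : ℝ) - s) * laguerreL α s x
      = ∑ i ∈ Finset.range (s+1), 1 / ((n : ℝ) - s) *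
          (poch (α + i + 1) (s - i) / (((s-i).factorial : ℝ) * (i.factorial : ℝ)) * (-x) ^ i) := by
    intro s _
    rw [laguerreL, Finset.mul_sum]
  rw [Finset.sum_congr rfl hR]
  rw [Finset.sum_sigma', Finset.sum_sigma']
  refine Finset.sum_nbij' (fun p => ⟨p.2, p.1 - p.2⟩) (fun p => ⟨p.1 + p.2, p.1⟩) ?_ ?_ ?_ ?_ ?_
  · rintro ⟨s, i⟩ hp
    simp only [Finset.mem_sigma, Finset.mem_range] at hp ⊢
    omega
  · rintro ⟨i, t⟩ hp
    simp only [Finset.mem_sigma, Finset.mem_range] at hp ⊢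
    obtain ⟨h1, h2⟩ := hp
    exact ⟨by omega, by omega⟩
  · rintro ⟨s, i⟩ hp
    simp only [Finset.mem_sigma, Finset.mem_range] at hp
    simp only [Sigma.mk.inj_iff]
    constructor
    · omega
    · exact heq_of_eq (by omega)
  · rintro ⟨i, t⟩ hp
    simp only [Finset.mem_sigma, Finset.mem_range] at hp
    simp only [Sigma.mk.inj_iff]
    exact ⟨trivial, heq_of_eq (by omega)⟩
  · rintro ⟨s, i⟩ hp
    simp only [Finset.mem_sigma, Finset.mem_range] at hp
    have h1 : i + (s - i) = s := by omega
    have h2 : (i:ℝ) + ((s - i : ℕ) : ℝ) = (s:ℝ) := by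
      rw [Nat.cast_sub (by omega : i ≤ s)]; ring
    simp only [h1, h2]

/-- Laguerre–Laguerre Koornwinder polynomial
`P^{(α,β)}_{n,k}(x,y) = L^{(α+2k+1)}_{n-k}(x) · x^k · L^{(β)}_k(y/x)`. -/
noncomputable def llP (α β : ℝ) (n k : ℕ) (x y : ℝ) : ℝ :=
  laguerreL (α + 2 * k + 1) (n - k) x * x ^ k * laguerreL β k (y / x)

/-- Parameter derivative with respect to `α` of the Laguerre–Laguerre Koornwinder polynomials. -/
theorem llP_hasDerivAt_param_alpha
    (β : ℝ) (hβ : β > -1) (n k : ℕ) (hk : 0 ≤ k) (hkn : k + 1 ≤ n)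
    (α : ℝ) (hα : α > -1) (hαβ : α - β > -1) (x : ℝ) (hx : 0 < x) (y : ℝ) :
    HasDerivAt (fun a : ℝ => llP a β n k x y)
      (∑ s ∈ Finset.range (n - k), (1 / ((n : ℝ) - k - s)) * llP α β (k + s) k x y) α := by
  have hg : HasDerivAt (fun a : ℝ => a + 2 * (k:ℝ) + 1) 1 α := by
    simpa [← add_assoc] using ((hasDerivAt_id α).add_const (2 * (k:ℝ) + 1))
  have hL := (laguerreL_hasDerivAt (n - k) x (α + 2 * k + 1)).comp α hg
  have h := (hL.mul_const (x ^ k)).mul_const (laguerreL β k (y / x))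
  have hfun : (fun a : ℝ => llP a β n k x y)
      = fun a : ℝ => ((fun b => laguerreL b (n - k) x) ∘ fun a : ℝ => a + 2 * (k:ℝ) + 1) a
          * x ^ k * laguerreL β k (y / x) := by
    funext a; simp [llP, Function.comp]
  rw [hfun]
  convert h using 1
  · rfl
  · rfl
  rw [Finset.sum_mul, Finset.sum_mul, Finset.sum_mul]
  refine Finset.sum_congr rfl fun s hs => ?_
  rw [Finset.mem_range] at hs
  have h1 : llP α β (k + s) k x y = laguerreL (α + 2 * k + 1) s x * x ^ k * laguerreL β k (y / x) := by
    simp [llP, Nat.add_sub_cancel_left]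
  have h2 : ((n - k : ℕ) : ℝ) - s = (n : ℝ) - k - s := by
    rw [Nat.cast_sub (by omega : k ≤ n)]
  rw [h1, h2]
  ring
end

section
/- Fix a real α > −1 and integers n, k with 1 ≤ k ≤ n. Then for every real β > −1 and all reals x > 0 and y, the function β ↦ P^{(α,β)}_{n,k}(x,y) (Laguerre–Laguerre Koornwinder polynomial) is differentiable at β with derivative ∑_{s=0}^{k−1} (1/(s+1)) · x^{s+1} · P^{(α+2s+2,β)}_{n−s−1,k−s−1}(x,y). -/
open Finset MeasureTheory Real

lemma key (a : ℝ) (m : ℕ) :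
    ∑ j ∈ range m, ∏ l ∈ (range m).erase j, (a + l)
    = ∑ t ∈ range m, (m.factorial : ℝ) / (((m - t : ℕ) : ℝ) * t.factorial) * poch a t := by
  induction m with
  | zero => simp
  | succ m ih =>
    have hm : m ∉ range m := by simp
    have hstep : ∑ j ∈ range (m+1), ∏ l ∈ (range (m+1)).erase j, (a + (l:ℝ))
        = (a + m) * (∑ j ∈ range m, ∏ l ∈ (range m).erase j, (a + l)) + poch a m := by
      rw [sum_range_succ]
      congr 1
      · rw [mul_sum]
        apply sum_congr rfl
        intro j hj
        rw [mem_range] at hj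
        rw [range_add_one, Finset.erase_insert_of_ne (by omega : m ≠ j),
          Finset.prod_insert (fun h => hm (Finset.mem_of_mem_erase h))]
      · rw [range_add_one, Finset.erase_insert hm]; rfl
    rw [hstep, ih, mul_sum]
    have hpoch : ∀ t, poch a (t+1) = poch a t * (a + t) := by
      intro t; rw [poch, poch, prod_range_succ]
    have expand : ∀ t ∈ range m, (a + m) * ((m.factorial : ℝ) / (((m - t : ℕ):ℝ) * t.factorial) * poch a t)
        = (m.factorial : ℝ) / (((m - t : ℕ):ℝ) * t.factorial) * poch a (t+1)
          + (m.factorial : ℝ) / t.factorial * poch a t := by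
      intro t ht
      rw [mem_range] at ht
      have h1 : ((m - t : ℕ) : ℝ) = (m : ℝ) - t := by
        rw [Nat.cast_sub ht.le]
      have h2 : ((m - t : ℕ) : ℝ) ≠ 0 := by
        rw [h1]; have : (t:ℝ) < m := by exact_mod_cast ht
        linarith
      have h3 : (t.factorial : ℝ) ≠ 0 := by positivity
      rw [hpoch]
      field_simp
      rw [h1]
      ring
    rw [Finset.sum_congr rfl expand, Finset.sum_add_distrib]
    have e1 : ∑ t ∈ range m, (m.factorial : ℝ) / (((m - t : ℕ):ℝ) * t.factorial) * poch a (t+1)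
        = ∑ t ∈ range (m+1), (if t = 0 then 0 else (m.factorial : ℝ) / (((m - (t-1) : ℕ):ℝ) * (t-1).factorial)) * poch a t := by
      rw [Finset.sum_range_succ']
      simp
    have e2 : ∑ t ∈ range m, (m.factorial : ℝ) / t.factorial * poch a t + poch a m
        = ∑ t ∈ range (m+1), (m.factorial : ℝ) / t.factorial * poch a t := by
      rw [Finset.sum_range_succ]
      congr 1
      rw [div_self (by positivity), one_mul]
    rw [add_assoc, e1, e2, ← Finset.sum_add_distrib]
    apply Finset.sum_congr rfl
    intro t ht
    rw [mem_range] at ht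
    rw [← add_mul]
    congr 1
    match t, ht with
    | 0, _ =>
      simp only [if_true, Nat.factorial_zero, Nat.cast_one, zero_add, Nat.sub_zero]
      rw [Nat.factorial_succ m]
      push_cast
      have : (m:ℝ) + 1 ≠ 0 := by positivity
      field_simp
    | (s+1), ht =>
      have hs : s < m := by omega
      simp only [Nat.succ_ne_zero, if_false, Nat.add_sub_cancel]
      have h1 : ((m - s : ℕ) : ℝ) = (m : ℝ) - s := by rw [Nat.cast_sub hs.le]
      have h2 : ((m - s : ℕ) : ℝ) ≠ 0 := by
        rw [h1]; have : (s:ℝ) < m := by exact_mod_cast hs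
        linarith
      rw [show m + 1 - (s+1) = m - s from by omega]
      have h3 : (s.factorial : ℝ) ≠ 0 := by positivity
      rw [Nat.factorial_succ (s), Nat.factorial_succ m]
      push_cast
      field_simp
      rw [h1]
      ring

lemma tri (k : ℕ) (F : ℕ → ℕ → ℝ) :
    ∑ i ∈ range (k+1), ∑ t ∈ range (k-i), F i t
    = ∑ j ∈ range k, ∑ i ∈ range (j+1), F i (j-i) := by
  induction k with
  | zero => simp
  | succ k ih =>
    rw [Finset.sum_range_succ (fun j => ∑ i ∈ range (j+1), F i (j-i)), ← ih]
    rw [Finset.sum_range_succ (fun i => ∑ t ∈ range (k+1-i), F i t)]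
    simp only [Nat.sub_self, range_zero, sum_empty, add_zero]
    rw [← Finset.sum_add_distrib]
    apply Finset.sum_congr rfl
    intro i hi
    rw [mem_range] at hi
    rw [show k + 1 - i = (k - i) + 1 by omega, Finset.sum_range_succ]

lemma laguerre_hasDeriv (k : ℕ) (z β : ℝ) :
    HasDerivAt (fun b : ℝ => laguerreL b k z)
      (∑ j ∈ range k, 1 / ((k - j : ℕ) : ℝ) * laguerreL β j z) β := by
  have hfun : (fun b : ℝ => laguerreL b k z)
      = fun b => ∑ i ∈ range (k+1),
          (∏ l ∈ range (k-i), (b + ((i:ℝ) + 1 + l)))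
            * ((-z)^i / (((k-i).factorial : ℝ) * i.factorial)) := by
    funext b
    unfold laguerreL poch
    apply sum_congr rfl
    intro i _
    rw [div_mul_eq_mul_div, mul_div_assoc]
    congr 1
    apply prod_congr rfl
    intro l _
    ring
  rw [hfun]
  have hder : HasDerivAt
      (fun b : ℝ => ∑ i ∈ range (k+1),
          (∏ l ∈ range (k-i), (b + ((i:ℝ) + 1 + l)))
            * ((-z)^i / (((k-i).factorial : ℝ) * i.factorial)))
      (∑ i ∈ range (k+1),
          (∑ j ∈ range (k-i), (∏ l ∈ (range (k-i)).erase j, (β + ((i:ℝ) + 1 + l))) • (1:ℝ))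
            * ((-z)^i / (((k-i).factorial : ℝ) * i.factorial))) β := by
    apply HasDerivAt.fun_sum
    intro i _
    exact (HasDerivAt.fun_finsetProd (fun l _ => (hasDerivAt_id β).add_const _)).mul_const _
  convert hder using 1
  -- now prove sum equality
  symm
  have hkey : ∀ i : ℕ,
      (∑ j ∈ range (k-i), (∏ l ∈ (range (k-i)).erase j, (β + ((i:ℝ) + 1 + l))) • (1:ℝ))
      = ∑ t ∈ range (k-i), ((k-i).factorial : ℝ) / ((((k-i) - t : ℕ) : ℝ) * t.factorial)
          * poch (β + i + 1) t := by
    intro i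
    rw [← key (β + i + 1) (k-i)]
    apply sum_congr rfl
    intro j _
    rw [smul_eq_mul, mul_one]
    apply prod_congr rfl
    intro l _
    ring
  calc ∑ i ∈ range (k+1),
        (∑ j ∈ range (k-i), (∏ l ∈ (range (k-i)).erase j, (β + ((i:ℝ) + 1 + l))) • (1:ℝ))
          * ((-z)^i / (((k-i).factorial : ℝ) * i.factorial))
      = ∑ i ∈ range (k+1), ∑ t ∈ range (k-i),
          ((k-i).factorial : ℝ) / ((((k-i) - t : ℕ) : ℝ) * t.factorial) * poch (β + i + 1) t
            * ((-z)^i / (((k-i).factorial : ℝ) * i.factorial)) := by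
        apply sum_congr rfl
        intro i _
        rw [hkey i, sum_mul]
    _ = ∑ j ∈ range k, ∑ i ∈ range (j+1),
          ((k-i).factorial : ℝ) / ((((k-i) - (j-i) : ℕ) : ℝ) * (j-i).factorial) * poch (β + i + 1) (j-i)
            * ((-z)^i / (((k-i).factorial : ℝ) * i.factorial)) := by
        exact tri k _
    _ = ∑ j ∈ range k, 1 / ((k - j : ℕ) : ℝ) * laguerreL β j z := by
        apply sum_congr rfl
        intro j hj
        rw [mem_range] at hj
        rw [laguerreL, mul_sum]
        apply sum_congr rfl
        intro i hi
        rw [mem_range] at hi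
        rw [show (k-i) - (j-i) = k - j from by omega]
        have h1 : ((k - j : ℕ) : ℝ) ≠ 0 := by
          have : 0 < k - j := by omega
          positivity
        have h2 : ((k - i).factorial : ℝ) ≠ 0 := by positivity
        have h3 : ((j - i).factorial : ℝ) ≠ 0 := by positivity
        have h4 : (i.factorial : ℝ) ≠ 0 := by positivity
        field_simp

/-- Parameter derivative with respect to `β` of the Laguerre–Laguerre Koornwinder polynomials. -/
theorem llP_hasDerivAt_param_beta
    (α : ℝ) (hα : α > -1) (n k : ℕ) (hk : 1 ≤ k) (hkn : k ≤ n)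
    (β : ℝ) (hβ : β > -1) (x : ℝ) (hx : 0 < x) (y : ℝ) :
    HasDerivAt (fun b : ℝ => llP α b n k x y)
      (∑ s ∈ Finset.range k,
          (1 / ((s : ℝ) + 1)) * x ^ (s + 1) * llP (α + 2 * s + 2) β (n - s - 1) (k - s - 1) x y)
      β := by
  have hC := (laguerre_hasDeriv k (y/x) β).const_mul
    (laguerreL (α + 2 * k + 1) (n - k) x * x ^ k)
  have hfun : (fun b : ℝ => llP α b n k x y)
      = fun b => (laguerreL (α + 2 * k + 1) (n - k) x * x ^ k) * laguerreL b k (y / x) := by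
    funext b; rw [llP]
  rw [show (fun b : ℝ => llP α b n k x y)
      = fun b => (laguerreL (α + 2 * k + 1) (n - k) x * x ^ k) * laguerreL b k (y / x)
    from hfun]
  refine hC.congr_deriv ?_; symm
  rw [mul_sum, ← Finset.sum_range_reflect (fun j => laguerreL (α + 2 * k + 1) (n - k) x * x ^ k
    * (1 / ((k - j : ℕ) : ℝ) * laguerreL β j (y / x))) k]
  apply Finset.sum_congr rfl
  intro s hs
  rw [mem_range] at hs
  rw [show k - 1 - s = k - s - 1 from by omega,
    show k - (k - s - 1) = s + 1 from by omega]
  simp only [llP]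
  rw [show (n - s - 1) - (k - s - 1) = n - k from by omega]
  have hcast : ((k - s - 1 : ℕ) : ℝ) = (k : ℝ) - s - 1 := by
    rw [show k - s - 1 = k - (s + 1) from by omega, Nat.cast_sub (by omega)]
    push_cast; ring
  rw [show α + 2 * (s:ℝ) + 2 + 2 * ((k - s - 1 : ℕ) : ℝ) + 1 = α + 2 * k + 1 from by
    rw [hcast]; ring]
  have hxp : x ^ (s + 1) * x ^ (k - s - 1) = x ^ k := by
    rw [← pow_add]
    congr 1
    omega
  rw [show ((s + 1 : ℕ) : ℝ) = (s : ℝ) + 1 from by push_cast; ring]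
  linear_combination (1 / ((s:ℝ) + 1) * laguerreL (α + 2 * k + 1) (n - k) x
    * laguerreL β (k - s - 1) (y / x)) * hxp
end
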